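/- Let X, X′ be i.i.d. random vectors and φ: R^d → R^k, ψ: R^d → R^ℓ centered representation maps. For λ ≥ 0, E[(φ(X)ᵀ(Σ_φ+λI)⁻¹φ(X′) − ψ(X)ᵀ(Σ_ψ+λI)⁻¹ψ(X′))²] = tr(Σ_φ^{-λ}Σ_φΣ_φ^{-λ}Σ_φ) + tr(Σ_ψ^{-λ}Σ_ψΣ_ψ^{-λ}Σ_ψ) − 2 tr(Σ_φ^{-λ}Σ_{φψ}Σ_ψ^{-λ}Σ_{φψ}ᵀ), where Σ_f^{-λ} = (Σ_f + λI)⁻¹ and Σ_{φψ} = E[φ(X)ψ(X)ᵀ]. -/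

import Mathlib

open MeasureTheory Matrix

lemma memL2_integrable_mul {Ω : Type*} [MeasurableSpace Ω] {μ : Measure Ω}
    {f g : Ω → ℝ} (hf : MemLp f 2 μ) (hg : MemLp g 2 μ) :
    Integrable (fun ω => f ω * g ω) μ := by
  refine Integrable.mono' (((hf.integrable_sq.add hg.integrable_sq).const_mul (1/2 : ℝ)))
    (hf.1.mul hg.1) ?_
  filter_upwards with ω
  rw [Real.norm_eq_abs, abs_mul]
  simp only [Pi.add_apply]
  nlinarith [sq_nonneg (|f ω| - |g ω|), sq_abs (f ω), sq_abs (g ω)]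

lemma quad_integral {Ω : Type*} [MeasurableSpace Ω] (μ : Measure Ω) [IsProbabilityMeasure μ]
    {m n m' n' : ℕ}
    (u : Fin m → Ω → ℝ) (v : Fin n → Ω → ℝ) (u' : Fin m' → Ω → ℝ) (v' : Fin n' → Ω → ℝ)
    (hu : ∀ i, MemLp (u i) 2 μ) (hv : ∀ i, MemLp (v i) 2 μ)
    (hu' : ∀ i, MemLp (u' i) 2 μ) (hv' : ∀ i, MemLp (v' i) 2 μ)
    (B : Matrix (Fin m) (Fin n) ℝ) (C : Matrix (Fin m') (Fin n') ℝ) :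
    Integrable (fun p : Ω × Ω =>
      (∑ i, ∑ j, u i p.1 * (B i j * v j p.2)) * (∑ i, ∑ j, u' i p.1 * (C i j * v' j p.2))) (μ.prod μ)
    ∧ ∫ p : Ω × Ω,
        (∑ i, ∑ j, u i p.1 * (B i j * v j p.2)) * (∑ i, ∑ j, u' i p.1 * (C i j * v' j p.2))
        ∂(μ.prod μ)
      = ∑ i', ∑ j', ∑ i, ∑ j,
          B i j * C i' j' * ((∫ ω, u i ω * u' i' ω ∂μ) * (∫ ω, v j ω * v' j' ω ∂μ)) := by
  have key : ∀ p : Ω × Ω,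
      (∑ i, ∑ j, u i p.1 * (B i j * v j p.2)) * (∑ i, ∑ j, u' i p.1 * (C i j * v' j p.2))
      = ∑ i', ∑ j', ∑ i, ∑ j,
          B i j * C i' j' * ((u i p.1 * u' i' p.1) * (v j p.2 * v' j' p.2)) := by
    intro p
    simp only [Finset.sum_mul, Finset.mul_sum]
    refine Finset.sum_congr rfl fun i' _ => ?_
    refine Finset.sum_congr rfl fun j' _ => ?_
    refine Finset.sum_congr rfl fun i _ => ?_
    refine Finset.sum_congr rfl fun j _ => ?_
    ring
  have I0 : ∀ (i : Fin m) (j : Fin n) (i' : Fin m') (j' : Fin n'),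
      Integrable (fun p : Ω × Ω =>
        B i j * C i' j' * ((u i p.1 * u' i' p.1) * (v j p.2 * v' j' p.2))) (μ.prod μ) := by
    intro i j i' j'
    have h := Integrable.mul_prod (L := ℝ) (memL2_integrable_mul (hu i) (hu' i'))
      (memL2_integrable_mul (hv j) (hv' j'))
    exact h.const_mul _
  have I1 : ∀ (i' : Fin m') (j' : Fin n') (i : Fin m),
      Integrable (fun p : Ω × Ω => ∑ j,
        B i j * C i' j' * ((u i p.1 * u' i' p.1) * (v j p.2 * v' j' p.2))) (μ.prod μ) :=
    fun i' j' i => integrable_finset_sum _ fun j _ => I0 i j i' j'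
  have I2 : ∀ (i' : Fin m') (j' : Fin n'),
      Integrable (fun p : Ω × Ω => ∑ i, ∑ j,
        B i j * C i' j' * ((u i p.1 * u' i' p.1) * (v j p.2 * v' j' p.2))) (μ.prod μ) :=
    fun i' j' => integrable_finset_sum _ fun i _ => I1 i' j' i
  have I3 : ∀ (i' : Fin m'),
      Integrable (fun p : Ω × Ω => ∑ j', ∑ i, ∑ j,
        B i j * C i' j' * ((u i p.1 * u' i' p.1) * (v j p.2 * v' j' p.2))) (μ.prod μ) :=
    fun i' => integrable_finset_sum _ fun j' _ => I2 i' j'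
  constructor
  · have : (fun p : Ω × Ω =>
        (∑ i, ∑ j, u i p.1 * (B i j * v j p.2)) * (∑ i, ∑ j, u' i p.1 * (C i j * v' j p.2)))
        = fun p => ∑ i', ∑ j', ∑ i, ∑ j,
          B i j * C i' j' * ((u i p.1 * u' i' p.1) * (v j p.2 * v' j' p.2)) := funext key
    rw [this]
    exact integrable_finset_sum _ fun i' _ => I3 i'
  · simp only [key]
    rw [integral_finset_sum _ fun i' _ => I3 i']
    refine Finset.sum_congr rfl fun i' _ => ?_
    rw [integral_finset_sum _ fun j' _ => I2 i' j']
    refine Finset.sum_congr rfl fun j' _ => ?_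
    rw [integral_finset_sum _ fun i _ => I1 i' j' i]
    refine Finset.sum_congr rfl fun i _ => ?_
    rw [integral_finset_sum _ fun j _ => I0 i j i' j']
    refine Finset.sum_congr rfl fun j _ => ?_
    rw [integral_const_mul]
    congr 1
    exact integral_prod_mul (L := ℝ) (fun ω => u i ω * u' i' ω) (fun ω => v j ω * v' j' ω)

lemma sum4_trace {m n m' n' : ℕ} (B : Matrix (Fin m) (Fin n) ℝ) (C : Matrix (Fin m') (Fin n') ℝ)
    (S1 : Matrix (Fin m) (Fin m') ℝ) (S2 : Matrix (Fin n) (Fin n') ℝ) :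
    (∑ i', ∑ j', ∑ i, ∑ j, B i j * C i' j' * (S1 i i' * S2 j j'))
    = Matrix.trace (Bᵀ * S1 * C * S2ᵀ) := by
  have step1 : (∑ i', ∑ j', ∑ i, ∑ j, B i j * C i' j' * (S1 i i' * S2 j j'))
      = Matrix.trace (C * (S1ᵀ * (B * S2))ᵀ) := by
    simp only [Matrix.trace, Matrix.diag_apply, Matrix.mul_apply, Matrix.transpose_apply,
      Finset.mul_sum, Finset.sum_mul]
    refine Finset.sum_congr rfl fun i' _ => ?_
    refine Finset.sum_congr rfl fun j' _ => ?_
    refine Finset.sum_congr rfl fun i _ => ?_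
    refine Finset.sum_congr rfl fun j _ => ?_
    ring
  rw [step1, Matrix.transpose_mul, Matrix.transpose_mul, Matrix.transpose_transpose,
    ← Matrix.mul_assoc, ← Matrix.mul_assoc, Matrix.trace_mul_cycle,
    Matrix.trace_mul_cycle, ← Matrix.mul_assoc]

/-- Closed form of the GULP distance in terms of (cross-)covariance matrices. -/
theorem stmt2 {Ω : Type*} [MeasurableSpace Ω] (μ : Measure Ω) [IsProbabilityMeasure μ]
    {d k l : ℕ} (X : Ω → (Fin d → ℝ))
    (φ : (Fin d → ℝ) → (Fin k → ℝ)) (ψ : (Fin d → ℝ) → (Fin l → ℝ))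
    (lam : ℝ) (hlam : 0 ≤ lam)
    (hmeasφ : Measurable fun ω => φ (X ω)) (hmeasψ : Measurable fun ω => ψ (X ω))
    (hL2φ : ∀ i, MemLp (fun ω => φ (X ω) i) 2 μ)
    (hL2ψ : ∀ i, MemLp (fun ω => ψ (X ω) i) 2 μ)
    (hcentφ : ∀ i, ∫ ω, φ (X ω) i ∂μ = 0) (hcentψ : ∀ i, ∫ ω, ψ (X ω) i ∂μ = 0)
    (Sφ : Matrix (Fin k) (Fin k) ℝ)
    (hSφ : Sφ = Matrix.of fun i j => ∫ ω, φ (X ω) i * φ (X ω) j ∂μ)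
    (Sψ : Matrix (Fin l) (Fin l) ℝ)
    (hSψ : Sψ = Matrix.of fun i j => ∫ ω, ψ (X ω) i * ψ (X ω) j ∂μ)
    (Sφψ : Matrix (Fin k) (Fin l) ℝ)
    (hSφψ : Sφψ = Matrix.of fun i j => ∫ ω, φ (X ω) i * ψ (X ω) j ∂μ)
    (Aφ : Matrix (Fin k) (Fin k) ℝ)
    (hAφ : Aφ = (Sφ + lam • (1 : Matrix (Fin k) (Fin k) ℝ))⁻¹)
    (Aψ : Matrix (Fin l) (Fin l) ℝ)
    (hAψ : Aψ = (Sψ + lam • (1 : Matrix (Fin l) (Fin l) ℝ))⁻¹) :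
    (∫ p : Ω × Ω,
        (φ (X p.1) ⬝ᵥ (Aφ *ᵥ φ (X p.2)) - ψ (X p.1) ⬝ᵥ (Aψ *ᵥ ψ (X p.2))) ^ 2
        ∂(μ.prod μ))
      = Matrix.trace (Aφ * Sφ * Aφ * Sφ) + Matrix.trace (Aψ * Sψ * Aψ * Sψ)
        - 2 * Matrix.trace (Aφ * Sφψ * Aψ * Sφψᵀ) := by
  -- symmetry facts
  have hSφsymm : Sφᵀ = Sφ := by
    rw [hSφ]; ext i j
    simp only [Matrix.transpose_apply, Matrix.of_apply]
    simp_rw [mul_comm]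
  have hSψsymm : Sψᵀ = Sψ := by
    rw [hSψ]; ext i j
    simp only [Matrix.transpose_apply, Matrix.of_apply]
    simp_rw [mul_comm]
  have hAφsymm : Aφᵀ = Aφ := by
    rw [hAφ, Matrix.transpose_nonsing_inv]
    congr 1
    rw [Matrix.transpose_add, hSφsymm, Matrix.transpose_smul, Matrix.transpose_one]
  have hAψsymm : Aψᵀ = Aψ := by
    rw [hAψ, Matrix.transpose_nonsing_inv]
    congr 1
    rw [Matrix.transpose_add, hSψsymm, Matrix.transpose_smul, Matrix.transpose_one]
  set F : Fin k → Ω → ℝ := fun i ω => φ (X ω) i with hF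
  set G : Fin l → Ω → ℝ := fun i ω => ψ (X ω) i with hG
  obtain ⟨iaa, haa⟩ := quad_integral μ F F F F hL2φ hL2φ hL2φ hL2φ Aφ Aφ
  obtain ⟨iab, hab⟩ := quad_integral μ F F G G hL2φ hL2φ hL2ψ hL2ψ Aφ Aψ
  obtain ⟨iba, hba⟩ := quad_integral μ G G F F hL2ψ hL2ψ hL2φ hL2φ Aψ Aφ
  obtain ⟨ibb, hbb⟩ := quad_integral μ G G G G hL2ψ hL2ψ hL2ψ hL2ψ Aψ Aψ
  have hrep : ∀ p : Ω × Ω,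
      (φ (X p.1) ⬝ᵥ (Aφ *ᵥ φ (X p.2)) - ψ (X p.1) ⬝ᵥ (Aψ *ᵥ ψ (X p.2))) ^ 2
      = (∑ i, ∑ j, F i p.1 * (Aφ i j * F j p.2)) * (∑ i, ∑ j, F i p.1 * (Aφ i j * F j p.2))
        - ((∑ i, ∑ j, F i p.1 * (Aφ i j * F j p.2)) * (∑ i, ∑ j, G i p.1 * (Aψ i j * G j p.2))
          + ((∑ i, ∑ j, G i p.1 * (Aψ i j * G j p.2)) * (∑ i, ∑ j, F i p.1 * (Aφ i j * F j p.2))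
            - (∑ i, ∑ j, G i p.1 * (Aψ i j * G j p.2)) * (∑ i, ∑ j, G i p.1 * (Aψ i j * G j p.2)))) := by
    intro p
    have h1 : φ (X p.1) ⬝ᵥ (Aφ *ᵥ φ (X p.2)) = ∑ i, ∑ j, F i p.1 * (Aφ i j * F j p.2) := by
      simp [dotProduct, Matrix.mulVec, Finset.mul_sum, hF]
    have h2 : ψ (X p.1) ⬝ᵥ (Aψ *ᵥ ψ (X p.2)) = ∑ i, ∑ j, G i p.1 * (Aψ i j * G j p.2) := by
      simp [dotProduct, Matrix.mulVec, Finset.mul_sum, hG]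
    rw [h1, h2]; ring
  rw [integral_congr_ae (Filter.Eventually.of_forall hrep)]
  have iH : Integrable (fun p : Ω × Ω =>
      (∑ i, ∑ j, G i p.1 * (Aψ i j * G j p.2)) * (∑ i, ∑ j, F i p.1 * (Aφ i j * F j p.2))
      - (∑ i, ∑ j, G i p.1 * (Aψ i j * G j p.2)) * (∑ i, ∑ j, G i p.1 * (Aψ i j * G j p.2)))
      (μ.prod μ) := iba.sub ibb
  have iG : Integrable (fun p : Ω × Ω =>
      (∑ i, ∑ j, F i p.1 * (Aφ i j * F j p.2)) * (∑ i, ∑ j, G i p.1 * (Aψ i j * G j p.2))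
      + ((∑ i, ∑ j, G i p.1 * (Aψ i j * G j p.2)) * (∑ i, ∑ j, F i p.1 * (Aφ i j * F j p.2))
        - (∑ i, ∑ j, G i p.1 * (Aψ i j * G j p.2)) * (∑ i, ∑ j, G i p.1 * (Aψ i j * G j p.2))))
      (μ.prod μ) := iab.add iH
  rw [integral_sub iaa iG, integral_add iab iH, integral_sub iba ibb]
  have hSφe : ∀ i i', (∫ ω, F i ω * F i' ω ∂μ) = Sφ i i' := by
    intro i i'; rw [hSφ]; rfl
  have hSψe : ∀ i i', (∫ ω, G i ω * G i' ω ∂μ) = Sψ i i' := by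
    intro i i'; rw [hSψ]; rfl
  have hSφψe : ∀ i i', (∫ ω, F i ω * G i' ω ∂μ) = Sφψ i i' := by
    intro i i'; rw [hSφψ]; rfl
  have hSψφe : ∀ i i', (∫ ω, G i ω * F i' ω ∂μ) = Sφψᵀ i i' := by
    intro i i'
    rw [Matrix.transpose_apply, ← hSφψe]
    congr 1; funext ω; ring
  simp only [hSφe, hSψe, hSφψe, hSψφe] at haa hab hba hbb
  rw [haa, hab, hba, hbb, sum4_trace, sum4_trace, sum4_trace, sum4_trace]
  rw [hAφsymm, hAψsymm, hSφsymm, hSψsymm, Matrix.transpose_transpose]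
  have hcyc : Matrix.trace (Aψ * Sφψᵀ * Aφ * Sφψ) = Matrix.trace (Aφ * Sφψ * Aψ * Sφψᵀ) := by
    rw [Matrix.mul_assoc, Matrix.trace_mul_comm, ← Matrix.mul_assoc]
  rw [hcyc]
  ring
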